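/- For every real number a ≠ 0 and every t ≥ 0: ∫₀^t ∫₀^{t₁} cos((t₁ − t₂) a) t₂² dt₂ dt₁ = (2 / a⁴) ( cos(t a) − 1 + t² a² / 2 ), and this quantity is nonnegative. (This is the explicit kernel identity, equation (D1a) of the paper, whose nonnegativity is the key sign information in the sharpness argument for the multilinear smoothing estimate.) -/

import Mathlib

open Real

lemma inner_int (a : ℝ) (ha : a ≠ 0) (t₁ : ℝ) :
    (∫ t₂ in (0 : ℝ)..t₁, Real.cos ((t₁ - t₂) * a) * t₂ ^ 2)
      = 2 * t₁ / a ^ 2 - 2 * Real.sin (t₁ * a) / a ^ 3 := by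
  have key : ∀ s : ℝ, HasDerivAt (fun s : ℝ =>
      -s ^ 2 * Real.sin ((t₁ - s) * a) / a + 2 * s * Real.cos ((t₁ - s) * a) / a ^ 2
        + 2 * Real.sin ((t₁ - s) * a) / a ^ 3)
      (Real.cos ((t₁ - s) * a) * s ^ 2) s := by
    intro s
    have h0 : HasDerivAt (fun s : ℝ => (t₁ - s) * a) (-a) s := by
      simpa using ((hasDerivAt_id s).const_sub t₁).mul_const a
    have hs : HasDerivAt (fun s : ℝ => Real.sin ((t₁ - s) * a))
        (Real.cos ((t₁ - s) * a) * (-a)) s := (Real.hasDerivAt_sin _).comp s h0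
    have hc : HasDerivAt (fun s : ℝ => Real.cos ((t₁ - s) * a))
        (-Real.sin ((t₁ - s) * a) * (-a)) s := (Real.hasDerivAt_cos _).comp s h0
    have h1 : HasDerivAt (fun s : ℝ => -s ^ 2 * Real.sin ((t₁ - s) * a) / a)
        ((-(2 * s) * Real.sin ((t₁ - s) * a) + -s ^ 2 * (Real.cos ((t₁ - s) * a) * (-a))) / a) s := by
      exact (((hasDerivAt_pow 2 s).neg.mul hs).div_const a).congr_deriv (by simp only [Pi.neg_apply]; ring)
    have h2 : HasDerivAt (fun s : ℝ => 2 * s * Real.cos ((t₁ - s) * a) / a ^ 2)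
        ((2 * Real.cos ((t₁ - s) * a) + 2 * s * (-Real.sin ((t₁ - s) * a) * (-a))) / a ^ 2) s := by
      exact ((((hasDerivAt_id s).const_mul 2).mul hc).div_const (a ^ 2)).congr_deriv (by simp only [id_eq]; ring)
    have h3 : HasDerivAt (fun s : ℝ => 2 * Real.sin ((t₁ - s) * a) / a ^ 3)
        (2 * (Real.cos ((t₁ - s) * a) * (-a)) / a ^ 3) s := (hs.const_mul 2).div_const _
    have := (h1.add h2).add h3
    refine this.congr_deriv ?_
    field_simp
    ring
  have hcont : ∀ s ∈ Set.uIcc (0 : ℝ) t₁,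
      ContinuousAt (fun t₂ => Real.cos ((t₁ - t₂) * a) * t₂ ^ 2) s := by
    intro s _
    exact ((Real.continuous_cos.comp (by continuity)).mul (by continuity)).continuousAt
  have := intervalIntegral.integral_eq_sub_of_hasDerivAt (fun s _ => key s)
    (by
      apply ContinuousOn.intervalIntegrable
      exact fun s hs => (hcont s hs).continuousWithinAt)
  rw [this]
  simp [Real.sin_zero, Real.cos_zero]

theorem stmt14 (a : ℝ) (ha : a ≠ 0) (t : ℝ) (ht : 0 ≤ t) :
    (∫ t₁ in (0 : ℝ)..t, ∫ t₂ in (0 : ℝ)..t₁, Real.cos ((t₁ - t₂) * a) * t₂ ^ 2)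
        = 2 / a ^ 4 * (Real.cos (t * a) - 1 + t ^ 2 * a ^ 2 / 2) ∧
    0 ≤ 2 / a ^ 4 * (Real.cos (t * a) - 1 + t ^ 2 * a ^ 2 / 2) := by
  constructor
  · have hcongr : (∫ t₁ in (0 : ℝ)..t, ∫ t₂ in (0 : ℝ)..t₁, Real.cos ((t₁ - t₂) * a) * t₂ ^ 2)
        = ∫ t₁ in (0 : ℝ)..t, (2 * t₁ / a ^ 2 - 2 * Real.sin (t₁ * a) / a ^ 3) := by
      apply intervalIntegral.integral_congr
      intro s _
      exact inner_int a ha s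
    rw [hcongr]
    have key : ∀ s : ℝ, HasDerivAt (fun s : ℝ => s ^ 2 / a ^ 2 + 2 * Real.cos (s * a) / a ^ 4)
        (2 * s / a ^ 2 - 2 * Real.sin (s * a) / a ^ 3) s := by
      intro s
      have h0 : HasDerivAt (fun s : ℝ => s * a) a s := by
        simpa using (hasDerivAt_id s).mul_const a
      have hc : HasDerivAt (fun s : ℝ => Real.cos (s * a)) (-Real.sin (s * a) * a) s :=
        (Real.hasDerivAt_cos _).comp s h0
      have := (((hasDerivAt_pow 2 s).div_const (a ^ 2)).add
        ((hc.const_mul 2).div_const (a ^ 4)))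
      refine this.congr_deriv ?_
      field_simp
      ring
    rw [intervalIntegral.integral_eq_sub_of_hasDerivAt (fun s _ => key s)
      (by
        apply ContinuousOn.intervalIntegrable
        apply Continuous.continuousOn
        continuity)]
    simp [Real.cos_zero]
    field_simp
    ring
  · apply mul_nonneg
    · positivity
    · have := Real.one_sub_sq_div_two_le_cos (x := t * a)
      nlinarith [sq_nonneg (t * a)]
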